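/- Let F : Δ_A → [0,1]^K be L-Lipschitz, let δ ≥ 0, and let π* ∈ Δ_A be a δ-MF-NE of F. Then the symmetric strategy profile (π*, …, π*) ∈ Δ_A^N is a (δ + L(2√2 + 4)/N + 4L/√N)-Nash equilibrium of the N-player game; that is, for every player i, E^i_exp(π*, …, π*) ≤ δ + L(2√2 + 4)/N + 4L/√N. -/

import Mathlib

open scoped BigOperators
open MeasureTheory ProbabilityTheory Finset

noncomputable section

/-- The probability simplex over `Fin K`, inside Euclidean space (ℓ2 norm). -/
def simplex (K : ℕ) : Set (EuclideanSpace ℝ (Fin K)) :=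
  {x | (∀ a, 0 ≤ x a) ∧ ∑ a, x a = 1}

/-- Empirical occupancy measure `μ̂ = (1/N) ∑_j e_{a^j}` of an action profile. -/
def empDist (K N : ℕ) (v : Fin N → Fin K) : EuclideanSpace ℝ (Fin K) :=
  (N : ℝ)⁻¹ • ∑ j : Fin N, EuclideanSpace.single (v j) (1 : ℝ)

/-- Expected payoff `V^i(π¹,…,π^N) = E[F(μ̂)(a^i)]`, written as the finite sum over
action profiles weighted by the product of the independent mixed strategies. -/
def Vval (K N : ℕ) (F : EuclideanSpace ℝ (Fin K) → EuclideanSpace ℝ (Fin K))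
    (π : Fin N → EuclideanSpace ℝ (Fin K)) (i : Fin N) : ℝ :=
  ∑ v : Fin N → Fin K, (∏ j : Fin N, π j (v j)) * F (empDist K N v) (v i)

/-- Exploitability `E^i_exp(π¹,…,π^N) = sup_{π′∈Δ} V^i(π′,π^{−i}) − V^i(π¹,…,π^N)`. -/
def expl (K N : ℕ) (F : EuclideanSpace ℝ (Fin K) → EuclideanSpace ℝ (Fin K))
    (π : Fin N → EuclideanSpace ℝ (Fin K)) (i : Fin N) : ℝ :=
  (⨆ p : simplex K, Vval K N F (Function.update π i (p : EuclideanSpace ℝ (Fin K))) i)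
    - Vval K N F π i

section Helpers
variable {K N : ℕ}
lemma euclid_sum_apply {ι : Type*} (s : Finset ι) (f : ι → EuclideanSpace ℝ (Fin K)) (a : Fin K) :
    (∑ j ∈ s, f j) a = ∑ j ∈ s, f j a := by
  induction s using Finset.cons_induction with
  | empty => simp
  | cons j s hj ih => rw [Finset.sum_cons, Finset.sum_cons, PiLp.add_apply, ih]
lemma empDist_apply (v : Fin N → Fin K) (a : Fin K) :
    empDist K N v a = (N:ℝ)⁻¹ * ∑ j, (if a = v j then (1:ℝ) else 0) := by
  rw [empDist, PiLp.smul_apply, euclid_sum_apply, smul_eq_mul]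
  simp [EuclideanSpace.single_apply]
lemma mean_apply (π : Fin N → EuclideanSpace ℝ (Fin K)) (a : Fin K) :
    ((N:ℝ)⁻¹ • ∑ j, π j) a = (N:ℝ)⁻¹ * ∑ j, π j a := by
  rw [PiLp.smul_apply, euclid_sum_apply, smul_eq_mul]
lemma sq_norm_coords (x : EuclideanSpace ℝ (Fin K)) : ‖x‖^2 = ∑ a, (x a)^2 := by
  rw [EuclideanSpace.norm_eq, Real.sq_sqrt (by positivity)]
  simp [Real.norm_eq_abs, sq_abs]
lemma factor (g : Fin N → Fin K → ℝ) :
    ∑ v : Fin N → Fin K, ∏ j, g j (v j) = ∏ j, ∑ a, g j a := by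
  rw [Finset.prod_univ_sum, Fintype.piFinset_univ]
lemma prod_pair {M : Type*} [CommMonoid M] {j k : Fin N} (hjk : j ≠ k) (h : Fin N → M)
    (hone : ∀ l, l ≠ j → l ≠ k → h l = 1) : ∏ l, h l = h j * h k := by
  rw [← Finset.mul_prod_erase Finset.univ h (Finset.mem_univ j),
    ← Finset.mul_prod_erase _ h (Finset.mem_erase.2 ⟨hjk.symm, Finset.mem_univ k⟩),
    ← mul_assoc]
  have : ∏ l ∈ (Finset.univ.erase j).erase k, h l = 1 := by
    apply Finset.prod_eq_one
    intro l hl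
    rcases Finset.mem_erase.1 hl with ⟨hlk, hl2⟩
    exact hone l (Finset.mem_erase.1 hl2).1 hlk
  rw [this, mul_one]
variable (π : Fin N → EuclideanSpace ℝ (Fin K))
lemma expect_single (hπ : ∀ j, π j ∈ simplex K) (i : Fin N) (f : Fin K → ℝ) :
    ∑ v : Fin N → Fin K, (∏ j, π j (v j)) * f (v i) = ∑ a, π i a * f a := by
  have : ∀ v : Fin N → Fin K, (∏ j, π j (v j)) * f (v i)
      = ∏ j, (π j (v j) * (if j = i then f (v j) else 1)) := by
    intro v
    rw [Finset.prod_mul_distrib, Finset.prod_ite_eq' Finset.univ i (fun j => f (v j))]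
    simp
  simp_rw [this]
  rw [factor (fun j a => π j a * (if j = i then f a else 1))]
  have h2 : ∀ j, (∑ a, π j a * (if j = i then f a else 1)) = if j = i then ∑ a, π i a * f a else 1 := by
    intro j
    by_cases hj : j = i
    · subst hj; simp
    · simp [hj, (hπ j).2]
  simp_rw [h2]
  rw [Finset.prod_ite_eq' Finset.univ i (fun _ => ∑ a, π i a * f a)]
  simp
lemma expect_pair (hπ : ∀ j, π j ∈ simplex K) {j k : Fin N} (hjk : j ≠ k) (f g : Fin K → ℝ) :
    ∑ v : Fin N → Fin K, (∏ l, π l (v l)) * (f (v j) * g (v k))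
      = (∑ a, π j a * f a) * (∑ a, π k a * g a) := by
  set h : Fin N → Fin K → ℝ := fun l a => if l = j then f a else if l = k then g a else 1 with hh
  have key : ∀ v : Fin N → Fin K, (∏ l, π l (v l)) * (f (v j) * g (v k))
      = ∏ l, (π l (v l) * h l (v l)) := by
    intro v
    rw [Finset.prod_mul_distrib]
    congr 1
    rw [prod_pair hjk (fun l => h l (v l)) (by intro l h1 h2; simp [hh, h1, h2])]
    simp [hh, hjk, hjk.symm]
  simp_rw [key]
  rw [factor (fun l a => π l a * h l a)]
  rw [prod_pair hjk (fun l => ∑ a, π l a * h l a) ?_]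
  · simp [hh, hjk, hjk.symm]
  · intro l h1 h2
    simp [hh, h1, h2, (hπ l).2]
lemma expect_one (hπ : ∀ j, π j ∈ simplex K) :
    ∑ v : Fin N → Fin K, (∏ j, π j (v j)) = 1 := by
  have := factor (fun j a => π j a * (1:ℝ))
  simp only [mul_one] at this
  rw [this]
  exact Finset.prod_eq_one (fun j _ => (hπ j).2)

lemma variance (hN : 0 < N) (hπ : ∀ j, π j ∈ simplex K) :
    ∑ v : Fin N → Fin K, (∏ j, π j (v j)) * ‖empDist K N v - (N:ℝ)⁻¹ • ∑ j, π j‖^2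
      ≤ (N:ℝ)⁻¹ := by
  set φ : Fin K → Fin N → Fin K → ℝ := fun a j b => (if a = b then 1 else 0) - π j a with hφ
  have hNpos : (0:ℝ) < N := by exact_mod_cast hN
  -- coordinate formula
  have step1 : ∀ v : Fin N → Fin K, ‖empDist K N v - (N:ℝ)⁻¹ • ∑ j, π j‖^2
      = ∑ a, ∑ j, ∑ k, (N:ℝ)⁻¹^2 * (φ a j (v j) * φ a k (v k)) := by
    intro v
    rw [sq_norm_coords]
    apply Finset.sum_congr rfl
    intro a _
    have hx : (empDist K N v - (N:ℝ)⁻¹ • ∑ j, π j) a = (N:ℝ)⁻¹ * ∑ j, φ a j (v j) := by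
      rw [PiLp.sub_apply, empDist_apply, mean_apply, ← mul_sub, ← Finset.sum_sub_distrib]
    rw [hx, mul_pow, pow_two (∑ j, φ a j (v j)), Finset.sum_mul_sum, Finset.mul_sum]
    exact Finset.sum_congr rfl fun j _ => by rw [Finset.mul_sum]
  simp_rw [step1, Finset.mul_sum]
  -- reorder: Σ_v Σ_a Σ_j Σ_k → Σ_a Σ_j Σ_k Σ_v
  rw [Finset.sum_comm]
  have reorder : ∀ a : Fin K, ∑ v : Fin N → Fin K, ∑ j, ∑ k,
        (∏ l, π l (v l)) * ((N:ℝ)⁻¹^2 * (φ a j (v j) * φ a k (v k)))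
      = ∑ j, ∑ k, ∑ v : Fin N → Fin K,
        (N:ℝ)⁻¹^2 * ((∏ l, π l (v l)) * (φ a j (v j) * φ a k (v k))) := by
    intro a
    rw [Finset.sum_comm]
    apply Finset.sum_congr rfl
    intro j _
    rw [Finset.sum_comm]
    apply Finset.sum_congr rfl
    intro k _
    apply Finset.sum_congr rfl
    intro v _
    ring
  simp_rw [reorder, ← Finset.mul_sum]
  -- now evaluate the inner expectation
  have inner_eval : ∀ a j k, (∑ v : Fin N → Fin K,
        (∏ l, π l (v l)) * (φ a j (v j) * φ a k (v k)))
      = if j = k then ∑ b, π j b * (φ a j b * φ a j b) else 0 := by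
    intro a j k
    by_cases hjk : j = k
    · subst hjk
      simp only [if_pos rfl]
      exact expect_single π hπ j (fun b => φ a j b * φ a j b)
    · rw [if_neg hjk, expect_pair π hπ hjk]
      have z : ∀ l, ∑ b, π l b * φ a l b = 0 := by
        intro l
        simp only [hφ, mul_sub, Finset.sum_sub_distrib]
        rw [← Finset.sum_mul, (hπ l).2, one_mul]
        simp [mul_ite, Finset.sum_ite_eq]
      rw [z j, zero_mul]
  simp_rw [inner_eval, Finset.sum_ite_eq, Finset.mem_univ, if_true]
  rw [Finset.sum_comm]
  have diag : ∀ j : Fin N, ∑ a : Fin K, ∑ b, π j b * (φ a j b * φ a j b) ≤ 1 := by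
    intro j
    set S := ∑ a, (π j a)^2 with hS
    have hSnn : 0 ≤ S := Finset.sum_nonneg fun a _ => sq_nonneg _
    rw [Finset.sum_comm]
    have hb : ∀ b : Fin K, ∑ a, π j b * (φ a j b * φ a j b) = π j b * (1 - 2 * π j b + S) := by
      intro b
      rw [← Finset.mul_sum]
      congr 1
      have e : ∀ a : Fin K, φ a j b * φ a j b
          = ((if a = b then (1:ℝ) else 0) - (if a = b then 2 * π j a else 0) + (π j a)^2) := by
        intro a
        by_cases hab : a = b
        · subst hab; simp [hφ]; ring
        · simp [hφ, hab]; ring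
      simp_rw [e]
      rw [Finset.sum_add_distrib, Finset.sum_sub_distrib,
        Finset.sum_ite_eq' Finset.univ b (fun _ => (1:ℝ)),
        Finset.sum_ite_eq' Finset.univ b (fun a => 2 * π j a)]
      simp [hS]
    simp_rw [hb]
    have expand : ∀ b, π j b * (1 - 2 * π j b + S) = π j b - 2 * (π j b)^2 + π j b * S := by
      intro b; ring
    simp_rw [expand]
    rw [Finset.sum_add_distrib, Finset.sum_sub_distrib, ← Finset.sum_mul, (hπ j).2, one_mul,
      ← Finset.mul_sum, ← hS]
    linarith [hSnn]
  have hfin : ∑ j : Fin N, (∑ a : Fin K, ∑ b, π j b * (φ a j b * φ a j b)) ≤ (N:ℝ) := by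
    calc ∑ j : Fin N, (∑ a : Fin K, ∑ b, π j b * (φ a j b * φ a j b))
        ≤ ∑ _j : Fin N, (1:ℝ) := Finset.sum_le_sum (fun j _ => diag j)
      _ = (N:ℝ) := by simp
  calc (N:ℝ)⁻¹^2 * ∑ j : Fin N, (∑ a : Fin K, ∑ b, π j b * (φ a j b * φ a j b))
      ≤ (N:ℝ)⁻¹^2 * N := mul_le_mul_of_nonneg_left hfin (by positivity)
    _ = (N:ℝ)⁻¹ := by field_simp

lemma emp_mem (hN : 0 < N) (v : Fin N → Fin K) : empDist K N v ∈ simplex K := by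
  constructor
  · intro a
    rw [empDist_apply]
    apply mul_nonneg (by positivity)
    exact Finset.sum_nonneg fun j _ => by positivity
  · simp_rw [empDist_apply]
    rw [← Finset.mul_sum, Finset.sum_comm]
    have : ∀ j : Fin N, ∑ a : Fin K, (if a = v j then (1:ℝ) else 0) = 1 := by
      intro j
      rw [Finset.sum_ite_eq' Finset.univ (v j) (fun _ => (1:ℝ))]
      simp
    simp_rw [this]
    have hN' : (N:ℝ) ≠ 0 := by positivity
    simp [hN']

lemma coord_abs_le_norm (x : EuclideanSpace ℝ (Fin K)) (a : Fin K) : |x a| ≤ ‖x‖ := by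
  rw [EuclideanSpace.norm_eq]
  have h1 : |x a|^2 ≤ ∑ b, ‖x b‖^2 := by
    have := Finset.single_le_sum (f := fun b => ‖x b‖^2) (fun b _ => by positivity)
      (Finset.mem_univ a)
    simpa [Real.norm_eq_abs, sq_abs] using this
  calc |x a| = Real.sqrt (|x a|^2) := by rw [Real.sqrt_sq (abs_nonneg _)]
    _ ≤ _ := Real.sqrt_le_sqrt h1

lemma simplex_dist {p q : EuclideanSpace ℝ (Fin K)} (hp : p ∈ simplex K) (hq : q ∈ simplex K) :
    ‖p - q‖ ≤ Real.sqrt 2 := by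
  rw [EuclideanSpace.norm_eq]
  apply Real.sqrt_le_sqrt
  have key : ∀ a : Fin K, ‖(p - q) a‖^2 ≤ p a + q a := by
    intro a
    rw [PiLp.sub_apply, Real.norm_eq_abs]
    have hp1 : p a ≤ 1 := by
      rw [← hp.2]; exact Finset.single_le_sum (fun b _ => hp.1 b) (Finset.mem_univ a)
    have hq1 : q a ≤ 1 := by
      rw [← hq.2]; exact Finset.single_le_sum (fun b _ => hq.1 b) (Finset.mem_univ a)
    have habs : |p a - q a| ≤ 1 := abs_le.2 ⟨by linarith [hp.1 a, hq.1 a], by linarith [hp.1 a, hq.1 a]⟩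
    have habs2 : |p a - q a| ≤ p a + q a :=
      abs_le.2 ⟨by linarith [hp.1 a, hq.1 a], by linarith [hp.1 a, hq.1 a]⟩
    calc |p a - q a|^2 = |p a - q a| * |p a - q a| := pow_two _
      _ ≤ 1 * |p a - q a| := mul_le_mul_of_nonneg_right habs (abs_nonneg _)
      _ = |p a - q a| := one_mul _
      _ ≤ p a + q a := habs2
  calc ∑ a, ‖(p - q) a‖^2 ≤ ∑ a, (p a + q a) := Finset.sum_le_sum fun a _ => key a
    _ = 2 := by rw [Finset.sum_add_distrib, hp.2, hq.2]; norm_num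

lemma claimA (hN : 0 < N) {L : ℝ} (hL : 0 ≤ L)
    (F : EuclideanSpace ℝ (Fin K) → EuclideanSpace ℝ (Fin K))
    (hFlip : ∀ μ ∈ simplex K, ∀ μ' ∈ simplex K, ‖F μ - F μ'‖ ≤ L * ‖μ - μ'‖)
    (πs : EuclideanSpace ℝ (Fin K)) (hπs : πs ∈ simplex K)
    (π : Fin N → EuclideanSpace ℝ (Fin K)) (hπ : ∀ j, π j ∈ simplex K) (i : Fin N) :
    |(∑ v : Fin N → Fin K, (∏ j, π j (v j)) * F (empDist K N v) (v i))
        - ∑ a, π i a * F πs a|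
      ≤ L * ‖(N:ℝ)⁻¹ • ∑ j, π j - πs‖ + L / Real.sqrt N := by
  set w : (Fin N → Fin K) → ℝ := fun v => ∏ j, π j (v j) with hw
  set m : EuclideanSpace ℝ (Fin K) := (N:ℝ)⁻¹ • ∑ j, π j with hm
  have hwnn : ∀ v, 0 ≤ w v := fun v => Finset.prod_nonneg fun j _ => (hπ j).1 (v j)
  have hw1 : ∑ v : Fin N → Fin K, w v = 1 := expect_one π hπ
  have hrepr : ∑ a, π i a * F πs a = ∑ v : Fin N → Fin K, w v * F πs (v i) :=
    (expect_single π hπ i (fun a => F πs a)).symm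
  rw [hrepr, ← Finset.sum_sub_distrib]
  change |∑ v : Fin N → Fin K, (w v * F (empDist K N v) (v i) - w v * F πs (v i))| ≤ _
  simp_rw [← mul_sub]
  have habs : |∑ v : Fin N → Fin K, w v * (F (empDist K N v) (v i) - F πs (v i))|
      ≤ ∑ v : Fin N → Fin K, w v * |F (empDist K N v) (v i) - F πs (v i)| := by
    calc |∑ v : Fin N → Fin K, w v * (F (empDist K N v) (v i) - F πs (v i))|
        ≤ ∑ v : Fin N → Fin K, |w v * (F (empDist K N v) (v i) - F πs (v i))| :=
          Finset.abs_sum_le_sum_abs _ _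
      _ = ∑ v : Fin N → Fin K, w v * |F (empDist K N v) (v i) - F πs (v i)| := by
          apply Finset.sum_congr rfl; intro v _
          rw [abs_mul, abs_of_nonneg (hwnn v)]
  have hpt : ∀ v : Fin N → Fin K, |F (empDist K N v) (v i) - F πs (v i)|
      ≤ L * ‖empDist K N v - m‖ + L * ‖m - πs‖ := by
    intro v
    have h1 : |F (empDist K N v) (v i) - F πs (v i)| ≤ ‖F (empDist K N v) - F πs‖ := by
      have := coord_abs_le_norm (F (empDist K N v) - F πs) (v i)
      rwa [PiLp.sub_apply] at this
    have h2 : ‖F (empDist K N v) - F πs‖ ≤ L * ‖empDist K N v - πs‖ :=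
      hFlip _ (emp_mem hN v) _ hπs
    have h3 : ‖empDist K N v - πs‖ ≤ ‖empDist K N v - m‖ + ‖m - πs‖ := by
      calc ‖empDist K N v - πs‖ = ‖(empDist K N v - m) + (m - πs)‖ := by abel_nf
        _ ≤ _ := norm_add_le _ _
    calc |F (empDist K N v) (v i) - F πs (v i)| ≤ L * ‖empDist K N v - πs‖ := h1.trans h2
      _ ≤ L * (‖empDist K N v - m‖ + ‖m - πs‖) := mul_le_mul_of_nonneg_left h3 hL
      _ = L * ‖empDist K N v - m‖ + L * ‖m - πs‖ := by ring
  have hsum2 : ∑ v : Fin N → Fin K, w v * |F (empDist K N v) (v i) - F πs (v i)|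
      ≤ ∑ v : Fin N → Fin K, w v * (L * ‖empDist K N v - m‖ + L * ‖m - πs‖) :=
    Finset.sum_le_sum fun v _ => mul_le_mul_of_nonneg_left (hpt v) (hwnn v)
  have hcs : ∑ v : Fin N → Fin K, w v * ‖empDist K N v - m‖ ≤ (Real.sqrt N)⁻¹ := by
    have hsq : (∑ v : Fin N → Fin K, w v * ‖empDist K N v - m‖)^2
        ≤ (∑ v : Fin N → Fin K, w v) * (∑ v : Fin N → Fin K, w v * ‖empDist K N v - m‖^2) := by
      have := Finset.sum_mul_sq_le_sq_mul_sq Finset.univ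
        (fun v : Fin N → Fin K => Real.sqrt (w v))
        (fun v : Fin N → Fin K => Real.sqrt (w v) * ‖empDist K N v - m‖)
      have e1 : ∀ v : Fin N → Fin K, Real.sqrt (w v) * (Real.sqrt (w v) * ‖empDist K N v - m‖)
          = w v * ‖empDist K N v - m‖ := by
        intro v; rw [← mul_assoc, Real.mul_self_sqrt (hwnn v)]
      have e2 : ∀ v : Fin N → Fin K, Real.sqrt (w v)^2 = w v := fun v => Real.sq_sqrt (hwnn v)
      have e3 : ∀ v : Fin N → Fin K, (Real.sqrt (w v) * ‖empDist K N v - m‖)^2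
          = w v * ‖empDist K N v - m‖^2 := by
        intro v; rw [mul_pow, Real.sq_sqrt (hwnn v)]
      simp_rw [e1, e2, e3] at this
      exact this
    have hvar := variance π hN hπ
    have hnn : 0 ≤ ∑ v : Fin N → Fin K, w v * ‖empDist K N v - m‖ :=
      Finset.sum_nonneg fun v _ => mul_nonneg (hwnn v) (norm_nonneg _)
    have : (∑ v : Fin N → Fin K, w v * ‖empDist K N v - m‖)^2 ≤ (N:ℝ)⁻¹ := by
      rw [hw1, one_mul] at hsq
      exact hsq.trans hvar
    calc ∑ v : Fin N → Fin K, w v * ‖empDist K N v - m‖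
        = Real.sqrt ((∑ v : Fin N → Fin K, w v * ‖empDist K N v - m‖)^2) :=
          (Real.sqrt_sq hnn).symm
      _ ≤ Real.sqrt ((N:ℝ)⁻¹) := Real.sqrt_le_sqrt this
      _ = (Real.sqrt N)⁻¹ := Real.sqrt_inv N
  calc |∑ v : Fin N → Fin K, w v * (F (empDist K N v) (v i) - F πs (v i))|
      ≤ ∑ v : Fin N → Fin K, w v * (L * ‖empDist K N v - m‖ + L * ‖m - πs‖) :=
        habs.trans hsum2
    _ = L * (∑ v : Fin N → Fin K, w v * ‖empDist K N v - m‖)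
        + L * ‖m - πs‖ * (∑ v : Fin N → Fin K, w v) := by
        rw [Finset.mul_sum, Finset.mul_sum]
        rw [← Finset.sum_add_distrib]
        apply Finset.sum_congr rfl
        intro v _; ring
    _ ≤ L * (Real.sqrt N)⁻¹ + L * ‖m - πs‖ * 1 := by
        rw [hw1]
        have := mul_le_mul_of_nonneg_left hcs hL
        linarith
    _ = L * ‖m - πs‖ + L / Real.sqrt N := by rw [mul_one, div_eq_mul_inv]; ring

lemma mean_update (hN : 0 < N) (i : Fin N) (p πs : EuclideanSpace ℝ (Fin K)) :
    ‖(N:ℝ)⁻¹ • (∑ j, Function.update (fun _ : Fin N => πs) i p j) - πs‖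
      = (N:ℝ)⁻¹ * ‖p - πs‖ := by
  have hN' : (N:ℝ) ≠ 0 := by positivity
  have coord : ∀ a : Fin K,
      ((N:ℝ)⁻¹ • (∑ j, Function.update (fun _ : Fin N => πs) i p j) - πs) a
        = (N:ℝ)⁻¹ * ((p - πs) a) := by
    intro a
    rw [PiLp.sub_apply, mean_apply, PiLp.sub_apply]
    have hsum : ∑ j, Function.update (fun _ : Fin N => πs) i p j a
        = (N:ℝ) * πs a + (p a - πs a) := by
      have e : ∀ j : Fin N, Function.update (fun _ : Fin N => πs) i p j a
          = πs a + (if j = i then p a - πs a else 0) := by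
        intro j
        by_cases hj : j = i
        · subst hj; simp
        · simp [Function.update_of_ne hj, hj]
      simp_rw [e]
      rw [Finset.sum_add_distrib, Finset.sum_const, Finset.sum_ite_eq' Finset.univ i
        (fun _ => p a - πs a)]
      simp [mul_comm]
    rw [hsum]
    field_simp
    ring
  rw [EuclideanSpace.norm_eq, EuclideanSpace.norm_eq]
  simp_rw [Real.norm_eq_abs, sq_abs, coord, mul_pow, ← Finset.mul_sum]
  rw [Real.sqrt_mul (by positivity), Real.sqrt_sq (by positivity)]

end Helpers

/-- Theorem 1 of the paper, with explicit constants.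
If `F : Δ_A → [0,1]^K` is `L`-Lipschitz, `δ ≥ 0`, and `π*` is a `δ`-MF-NE of `F`, then the
symmetric profile `(π*,…,π*)` is a `(δ + L(2√2+4)/N + 4L/√N)`-Nash equilibrium of the
`N`-player game: every player's exploitability is at most this quantity. -/
theorem stmt4 (K N : ℕ) (hK : 0 < K) (hN : 0 < N) (L δ : ℝ) (hL : 0 ≤ L) (hδ : 0 ≤ δ)
    (F : EuclideanSpace ℝ (Fin K) → EuclideanSpace ℝ (Fin K))
    (hFmap : ∀ μ ∈ simplex K, ∀ a : Fin K, F μ a ∈ Set.Icc (0 : ℝ) 1)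
    (hFlip : ∀ μ ∈ simplex K, ∀ μ' ∈ simplex K, ‖F μ - F μ'‖ ≤ L * ‖μ - μ'‖)
    (πs : EuclideanSpace ℝ (Fin K)) (hπs : πs ∈ simplex K)
    (hMFNE : (⨆ p : simplex K, ∑ a : Fin K, (p : EuclideanSpace ℝ (Fin K)) a * F πs a) - δ
        ≤ ∑ a : Fin K, πs a * F πs a) :
    ∀ i : Fin N, expl K N F (fun _ => πs) i
        ≤ δ + L * (2 * Real.sqrt 2 + 4) / N + 4 * L / Real.sqrt N := by
  intro i
  have hNpos : (0:ℝ) < N := by exact_mod_cast hN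
  have hF1 : ∀ q ∈ simplex K, ∑ a, q a * F πs a ≤ 1 := by
    intro q hq
    calc ∑ a, q a * F πs a ≤ ∑ a, q a * 1 :=
          Finset.sum_le_sum fun a _ => mul_le_mul_of_nonneg_left (hFmap πs hπs a).2 (hq.1 a)
      _ = 1 := by simp [hq.2]
  have hbdd : BddAbove (Set.range fun q : simplex K =>
      ∑ a, (q : EuclideanSpace ℝ (Fin K)) a * F πs a) := by
    refine ⟨1, ?_⟩
    rintro x ⟨q, rfl⟩
    exact hF1 q q.2
  have hMF : ∀ q ∈ simplex K, ∑ a, q a * F πs a ≤ (∑ a, πs a * F πs a) + δ := by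
    intro q hq
    have h1 := le_ciSup hbdd (⟨q, hq⟩ : simplex K)
    simp only at h1
    linarith [hMFNE]
  set err := L * (Real.sqrt 2 / N) + L / Real.sqrt N with herr
  have main : ∀ p, p ∈ simplex K →
      |Vval K N F (Function.update (fun _ : Fin N => πs) i p) i - ∑ a, p a * F πs a| ≤ err := by
    intro p hp
    have hπp : ∀ j, Function.update (fun _ : Fin N => πs) i p j ∈ simplex K := by
      intro j
      by_cases hj : j = i
      · subst hj; simpa using hp
      · simpa [Function.update_of_ne hj] using hπs
    have h := claimA hN hL F hFlip πs hπs _ hπp i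
    rw [Function.update_self, mean_update hN i p πs] at h
    have hd : ‖p - πs‖ ≤ Real.sqrt 2 := simplex_dist hp hπs
    have hstep : L * ((N:ℝ)⁻¹ * ‖p - πs‖) ≤ L * (Real.sqrt 2 / N) := by
      have e : Real.sqrt 2 / (N:ℝ) = (N:ℝ)⁻¹ * Real.sqrt 2 := by ring
      rw [e]
      exact mul_le_mul_of_nonneg_left
        (mul_le_mul_of_nonneg_left hd (by positivity)) hL
    rw [herr]
    simp only [Vval]
    linarith
  have base : |Vval K N F (fun _ : Fin N => πs) i - ∑ a, πs a * F πs a| ≤ err := by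
    have h := main πs hπs
    rwa [show Function.update (fun _ : Fin N => πs) i πs = fun _ : Fin N => πs from
      Function.update_eq_self i _] at h
  have hnum : 2 * err ≤ L * (2 * Real.sqrt 2 + 4) / N + 4 * L / Real.sqrt N := by
    have e : L * (2 * Real.sqrt 2 + 4) / N + 4 * L / Real.sqrt N - 2 * err
        = 4 * (L / N) + 2 * (L / Real.sqrt N) := by rw [herr]; ring
    have p1 : 0 ≤ L / (N:ℝ) := by positivity
    have p2 : 0 ≤ L / Real.sqrt N := by positivity
    linarith
  have : Nonempty (simplex K) := ⟨⟨πs, hπs⟩⟩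
  rw [expl, sub_le_iff_le_add]
  apply ciSup_le
  intro q
  beta_reduce
  have h1 := main (q : EuclideanSpace ℝ (Fin K)) q.2
  have h2 := hMF (q : EuclideanSpace ℝ (Fin K)) q.2
  have habs1 := abs_le.1 h1
  have habs3 := abs_le.1 base
  clear_value err
  linarith [habs1.1, habs1.2, habs3.1, habs3.2, h2, hnum]
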